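/- Fix m ∈ ℕ and real numbers s₁,…,s_m, t₁,…,t_m, and use the matrix conventions of the context. If m' > m, then for any β¹,…,β^{m'} ∈ ℕ² the ordered matrix product M_{β¹} · M_{β²} ⋯ M_{β^{m'}} of (m+1)×(m+1) matrices is the zero matrix. -/

import Mathlib

/-- The diagonal matrix `E` with `E_{ii} = s₁ + ⋯ + s_i` (so `E_{00} = 0`). -/
noncomputable def Emat (m : ℕ) (s : ℕ → ℝ) : Matrix (Fin (m + 1)) (Fin (m + 1)) ℝ :=
  Matrix.diagonal fun i => ∑ p ∈ Finset.Icc 1 (i : ℕ), s p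

/-- The diagonal matrix `F` with `F_{ii} = t_{i+1} + ⋯ + t_m` (so `F_{mm} = 0`). -/
noncomputable def Fmat (m : ℕ) (t : ℕ → ℝ) : Matrix (Fin (m + 1)) (Fin (m + 1)) ℝ :=
  Matrix.diagonal fun i => ∑ p ∈ Finset.Icc ((i : ℕ) + 1) m, t p

/-- The nilpotent Jordan matrix `J` with `J_{i,i+1} = 1` and all other entries `0`. -/
def Jmat (m : ℕ) : Matrix (Fin (m + 1)) (Fin (m + 1)) ℝ :=
  Matrix.of fun i j => if (j : ℕ) = (i : ℕ) + 1 then 1 else 0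

/-- `M_β := (ad E)^{β₁} ((ad (F − J))^{β₂+1} (E))`, where `⁅A, B⁆ = A·B − B·A`. -/
noncomputable def Mmat (m : ℕ) (s t : ℕ → ℝ) (β₁ β₂ : ℕ) :
    Matrix (Fin (m + 1)) (Fin (m + 1)) ℝ :=
  (fun B => ⁅Emat m s, B⁆)^[β₁] ((fun B => ⁅Fmat m t - Jmat m, B⁆)^[β₂ + 1] (Emat m s))

/-- Strictly upper triangular predicate. -/
def SU (m : ℕ) (A : Matrix (Fin (m + 1)) (Fin (m + 1)) ℝ) : Prop :=
  ∀ i j : Fin (m + 1), (j : ℕ) ≤ (i : ℕ) → A i j = 0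

lemma su_diag_mul {m : ℕ} (d : Fin (m+1) → ℝ) {B : Matrix (Fin (m+1)) (Fin (m+1)) ℝ}
    (hB : SU m B) : SU m (Matrix.diagonal d * B) := by
  intro i j hij
  rw [Matrix.diagonal_mul, hB i j hij, mul_zero]

lemma su_mul_diag {m : ℕ} (d : Fin (m+1) → ℝ) {B : Matrix (Fin (m+1)) (Fin (m+1)) ℝ}
    (hB : SU m B) : SU m (B * Matrix.diagonal d) := by
  intro i j hij
  rw [Matrix.mul_diagonal, hB i j hij, zero_mul]

lemma su_J_mul {m : ℕ} {B : Matrix (Fin (m+1)) (Fin (m+1)) ℝ}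
    (hB : SU m B) : SU m (Jmat m * B) := by
  intro i j hij
  rw [Matrix.mul_apply]
  apply Finset.sum_eq_zero
  intro l _
  by_cases h : (l : ℕ) = (i : ℕ) + 1
  · rw [hB l j (by omega), mul_zero]
  · simp [Jmat, h]

lemma su_mul_J {m : ℕ} {B : Matrix (Fin (m+1)) (Fin (m+1)) ℝ}
    (hB : SU m B) : SU m (B * Jmat m) := by
  intro i j hij
  rw [Matrix.mul_apply]
  apply Finset.sum_eq_zero
  intro l _
  by_cases h : (j : ℕ) = (l : ℕ) + 1
  · rw [hB i l (by omega), zero_mul]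
  · simp [Jmat, h]

lemma su_sub {m : ℕ} {A B : Matrix (Fin (m+1)) (Fin (m+1)) ℝ}
    (hA : SU m A) (hB : SU m B) : SU m (A - B) := by
  intro i j hij
  simp [Matrix.sub_apply, hA i j hij, hB i j hij]

lemma su_adE {m : ℕ} (s : ℕ → ℝ) {B : Matrix (Fin (m+1)) (Fin (m+1)) ℝ}
    (hB : SU m B) : SU m ⁅Emat m s, B⁆ := by
  rw [Ring.lie_def]
  exact su_sub (su_diag_mul _ hB) (su_mul_diag _ hB)

lemma su_adFJ {m : ℕ} (t : ℕ → ℝ) {B : Matrix (Fin (m+1)) (Fin (m+1)) ℝ}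
    (hB : SU m B) : SU m ⁅Fmat m t - Jmat m, B⁆ := by
  rw [Ring.lie_def, sub_mul, Matrix.mul_sub]
  have h1 : SU m (Fmat m t * B - Jmat m * B) := su_sub (su_diag_mul _ hB) (su_J_mul hB)
  have h2 : SU m (B * Fmat m t - B * Jmat m) := su_sub (su_mul_diag _ hB) (su_mul_J hB)
  exact su_sub h1 h2

lemma su_first {m : ℕ} (s t : ℕ → ℝ) : SU m ⁅Fmat m t - Jmat m, Emat m s⁆ := by
  intro i j hij
  rw [Ring.lie_def]
  simp only [sub_mul, Matrix.mul_sub, Matrix.sub_apply]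
  have hFE : (Fmat m t * Emat m s) i j = (Emat m s * Fmat m t) i j := by
    simp only [Fmat, Emat, Matrix.diagonal_mul, Matrix.mul_diagonal, Matrix.diagonal_apply]
    split
    · rename_i h; subst h; ring
    · ring
  have hJE : (Jmat m * Emat m s) i j = 0 := by
    rw [Emat, Matrix.mul_diagonal]
    have : (Jmat m) i j = 0 := by simp [Jmat]; omega
    rw [this, zero_mul]
  have hEJ : (Emat m s * Jmat m) i j = 0 := by
    rw [Emat, Matrix.diagonal_mul]
    have : (Jmat m) i j = 0 := by simp [Jmat]; omega
    rw [this, mul_zero]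
  rw [hFE, hJE, hEJ]
  ring

lemma su_Mmat (m : ℕ) (s t : ℕ → ℝ) (β₁ β₂ : ℕ) : SU m (Mmat m s t β₁ β₂) := by
  unfold Mmat
  have hinner : SU m ((fun B => ⁅Fmat m t - Jmat m, B⁆)^[β₂ + 1] (Emat m s)) := by
    rw [Function.iterate_succ_apply]
    induction β₂ with
    | zero => exact su_first s t
    | succ n ih => rw [Function.iterate_succ_apply']; exact su_adFJ t ih
  induction β₁ with
  | zero => exact hinner
  | succ n ih => rw [Function.iterate_succ_apply']; exact su_adE s ih

lemma prod_su (m : ℕ) (L : List (Matrix (Fin (m+1)) (Fin (m+1)) ℝ))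
    (h : ∀ A ∈ L, SU m A) :
    ∀ i j : Fin (m+1), (j : ℕ) < (i : ℕ) + L.length → L.prod i j = 0 := by
  induction L with
  | nil =>
    intro i j hij
    simp only [List.length_nil, Nat.add_zero] at hij
    rw [List.prod_nil, Matrix.one_apply_ne (fun h => by subst h; omega)]
  | cons A L ih =>
    intro i j hij
    rw [List.prod_cons, Matrix.mul_apply]
    apply Finset.sum_eq_zero
    intro l _
    by_cases hl : (l : ℕ) ≤ (i : ℕ)
    · rw [h A ((List.mem_cons_self (a := A) (l := L))) i l hl, zero_mul]
    · rw [ih (fun B hB => h B (List.mem_cons_of_mem _ hB)) l j (by simp at hij ⊢; omega),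
        mul_zero]

/-- If `m' > m`, then any ordered product `M_{β¹} ⋯ M_{β^{m'}}` of
`(m+1) × (m+1)` matrices is zero. -/
theorem Mmat_ordered_prod_eq_zero (m m' : ℕ) (hm : m < m') (s t : ℕ → ℝ)
    (β : Fin m' → ℕ × ℕ) :
    (List.ofFn fun p : Fin m' => Mmat m s t (β p).1 (β p).2).prod = 0 := by
  ext i j
  rw [Matrix.zero_apply]
  apply prod_su
  · intro A hA
    rw [List.mem_ofFn] at hA
    obtain ⟨p, rfl⟩ := hA
    exact su_Mmat m s t _ _
  · rw [List.length_ofFn]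
    omega
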